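/- Let A = {t ∈ ℤ : t = 3x² − y² for some integers x, y}, B = {t ∈ ℤ : t = x² + y² for some integers x, y}, and C = {t ∈ ℤ : t = 2(x² − xy + y²) for some integers x, y}. Then A ∩ B ⊆ C, B ∩ C ⊆ A, and C ∩ A ⊆ B, and all three inclusions are strict. -/

import Mathlib

/-- `RepF c t` means `t` is represented by the form `a² - c b²`. -/
def RepF (c t : ℤ) : Prop := ∃ a b : ℤ, t = a ^ 2 - c * b ^ 2

lemma rep_zero (c : ℤ) : RepF c 0 := ⟨0, 0, by ring⟩
lemma rep_one (c : ℤ) : RepF c 1 := ⟨1, 0, by ring⟩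

lemma rep_sq_mul {c m : ℤ} (k : ℤ) (h : RepF c m) : RepF c (k ^ 2 * m) := by
  obtain ⟨a, b, rfl⟩ := h
  exact ⟨k * a, k * b, by ring⟩

lemma rep_mul {c s t : ℤ} (hs : RepF c s) (ht : RepF c t) : RepF c (s * t) := by
  obtain ⟨a, b, rfl⟩ := hs
  obtain ⟨d, e, rfl⟩ := ht
  exact ⟨a * d + c * b * e, a * e + b * d, by ring⟩

/-- anisotropic descent -/
lemma aniso {p : ℕ} [hp : Fact p.Prime] {c : ℤ} (hc : ¬ IsSquare (c : ZMod p))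
    {a b : ℤ} (h : (p : ℤ) ∣ a ^ 2 - c * b ^ 2) : (p : ℤ) ∣ a ∧ (p : ℤ) ∣ b := by
  have hz : ((a : ZMod p)) ^ 2 = (c : ZMod p) * (b : ZMod p) ^ 2 := by
    have := (ZMod.intCast_zmod_eq_zero_iff_dvd _ p).mpr h
    push_cast at this
    linear_combination this
  have hb : (b : ZMod p) = 0 := by
    by_contra hb
    exact hc ⟨(a : ZMod p) / (b : ZMod p), by
      field_simp at hz ⊢
      linear_combination -hz⟩
  have ha : (a : ZMod p) = 0 := by
    rw [hb] at hz
    simpa [pow_eq_zero_iff] using hz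
  exact ⟨(ZMod.intCast_zmod_eq_zero_iff_dvd _ p).mp ha,
    (ZMod.intCast_zmod_eq_zero_iff_dvd _ p).mp hb⟩

/-- Euler composition division at a prime. -/
lemma euler_div {p a b d e c : ℤ} (hp : Prime p) (h1 : p ∣ a ^ 2 - c * b ^ 2)
    (h2 : p ∣ d ^ 2 - c * e ^ 2) :
    ∃ u v : ℤ, (a ^ 2 - c * b ^ 2) * (d ^ 2 - c * e ^ 2) = p ^ 2 * (u ^ 2 - c * v ^ 2) := by
  have key : p ∣ (a * e - b * d) * (a * e + b * d) := by
    have : (a * e - b * d) * (a * e + b * d)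
        = e ^ 2 * (a ^ 2 - c * b ^ 2) - b ^ 2 * (d ^ 2 - c * e ^ 2) := by ring
    rw [this]
    exact dvd_sub (Dvd.dvd.mul_left h1 _) (Dvd.dvd.mul_left h2 _)
  rcases hp.dvd_mul.mp key with hcase | hcase
  · -- p ∣ a e - b d
    have h3 : p ∣ a * d - c * b * e := by
      have hsq : p ∣ (a * d - c * b * e) ^ 2 := by
        have : (a * d - c * b * e) ^ 2
            = (a ^ 2 - c * b ^ 2) * (d ^ 2 - c * e ^ 2) + c * (a * e - b * d) ^ 2 := by ring
        rw [this]
        exact dvd_add (Dvd.dvd.mul_right h1 _) ((dvd_pow hcase two_ne_zero).mul_left c)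
      exact hp.dvd_of_dvd_pow hsq
    obtain ⟨u, hu⟩ := h3
    obtain ⟨v, hv⟩ := hcase
    exact ⟨u, v, by rw [show (a ^ 2 - c * b ^ 2) * (d ^ 2 - c * e ^ 2) = (a * d - c * b * e) ^ 2 - c * (a * e - b * d) ^ 2 by ring, hu, hv]; ring⟩
  · -- p ∣ a e + b d
    have h3 : p ∣ a * d + c * b * e := by
      have hsq : p ∣ (a * d + c * b * e) ^ 2 := by
        have : (a * d + c * b * e) ^ 2
            = (a ^ 2 - c * b ^ 2) * (d ^ 2 - c * e ^ 2) + c * (a * e + b * d) ^ 2 := by ring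
        rw [this]
        exact dvd_add (Dvd.dvd.mul_right h1 _) ((dvd_pow hcase two_ne_zero).mul_left c)
      exact hp.dvd_of_dvd_pow hsq
    obtain ⟨u, hu⟩ := h3
    obtain ⟨v, hv⟩ := hcase
    exact ⟨u, v, by rw [show (a ^ 2 - c * b ^ 2) * (d ^ 2 - c * e ^ 2) = (a * d + c * b * e) ^ 2 - c * (a * e + b * d) ^ 2 by ring, hu, hv]; ring⟩

section P2

lemma exists_near (m a : ℤ) (hm : 0 < m) : ∃ a' : ℤ, m ∣ a - a' ∧ 2 * |a'| ≤ m := by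
  have h0 : 0 ≤ a % m := Int.emod_nonneg a (ne_of_gt hm)
  have h1 : a % m < m := Int.emod_lt_of_pos a hm
  have hdvd : m ∣ a - a % m := Int.dvd_self_sub_of_emod_eq rfl
  by_cases hc : 2 * (a % m) ≤ m
  · exact ⟨a % m, hdvd, by rwa [abs_of_nonneg h0]⟩
  · refine ⟨a % m - m, ?_, ?_⟩
    · have h2 : a - (a % m - m) = (a - a % m) + m := by ring
      rw [h2]; exact dvd_add hdvd dvd_rfl
    · rw [abs_of_nonpos (by omega)]; omega

lemma sq_eq_three_sq_aux : ∀ n : ℕ, ∀ a b : ℤ, a.natAbs ≤ n → a ^ 2 = 3 * b ^ 2 → a = 0 ∧ b = 0 := by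
  intro n
  induction n with
  | zero =>
    intro a b ha h
    have ha0 : a = 0 := by omega
    subst ha0
    refine ⟨rfl, by nlinarith [sq_nonneg b]⟩
  | succ n ih =>
    intro a b ha h
    rcases eq_or_ne a 0 with rfl | hane
    · exact ⟨rfl, by nlinarith [sq_nonneg b]⟩
    · have h3 : (3 : ℤ) ∣ a := Int.prime_three.dvd_of_dvd_pow (⟨b ^ 2, h⟩ : (3:ℤ) ∣ a ^ 2)
      obtain ⟨a', rfl⟩ := h3
      have hb : b ^ 2 = 3 * a' ^ 2 := by nlinarith
      have hlt : b.natAbs < (3 * a').natAbs := by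
        rw [Int.natAbs_lt_iff_sq_lt]
        have ha' : a' ≠ 0 := fun h0 => hane (by rw [h0]; ring)
        have hpos : 0 < a' ^ 2 := by positivity
        nlinarith [sq_nonneg b]
      obtain ⟨hb0, ha0⟩ := ih b a' (by omega) hb
      subst hb0; subst ha0; simp at hane

lemma sq_eq_three_sq {a b : ℤ} (h : a ^ 2 = 3 * b ^ 2) : a = 0 ∧ b = 0 :=
  sq_eq_three_sq_aux a.natAbs a b le_rfl h

end P2

section Parity

/-- Loeschian to `x² + 3y²` form. -/
lemma loesch_rep {n u v : ℤ} (h : n = u ^ 2 - u * v + v ^ 2) : RepF (-3) n := by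
  rcases Int.even_or_odd v with ⟨w, hv⟩ | ⟨w, hv⟩
  · exact ⟨u - w, w, by rw [h, hv]; ring⟩
  · rcases Int.even_or_odd u with ⟨w', hu⟩ | ⟨w', hu⟩
    · exact ⟨v - w', w', by rw [h, hu]; ring⟩
    · obtain ⟨w2, hw2⟩ : Even (u - v) := by
        rw [hu, hv]; exact ⟨w' - w, by ring⟩
      exact ⟨u - w2, w2, by rw [h, show v = u - 2 * w2 by omega]; ring⟩

lemma rep_loesch {n : ℤ} (h : RepF (-3) n) : ∃ u v : ℤ, n = u ^ 2 - u * v + v ^ 2 := by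
  obtain ⟨a, b, rfl⟩ := h
  exact ⟨a + b, 2 * b, by ring⟩

/-- An odd value of `x² - 3y²` is `1 mod 4`. -/
lemma repR_odd_mod_four {t : ℤ} (h : RepF 3 t) (ho : Odd t) : t % 4 = 1 := by
  obtain ⟨a, b, hs⟩ := h
  obtain ⟨m, hm⟩ := ho
  rcases Int.even_or_odd a with ⟨k, hk⟩ | ⟨k, hk⟩ <;>
    rcases Int.even_or_odd b with ⟨l, hl⟩ | ⟨l, hl⟩
  · obtain ⟨M, hM⟩ : ∃ M, t = 2 * M := ⟨2*k^2 - 6*l^2, by rw [hs, hk, hl]; ring⟩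
    omega
  · obtain ⟨M, hM⟩ : ∃ M, t = 4 * M + 1 :=
      ⟨k^2 - 3*(l*l) - 3*l - 1, by rw [hs, hk, hl]; ring⟩
    omega
  · obtain ⟨M, hM⟩ : ∃ M, t = 4 * M + 1 :=
      ⟨k*k + k - 3*l^2, by rw [hs, hk, hl]; ring⟩
    omega
  · obtain ⟨M, hM⟩ : ∃ M, t = 4 * M - 2 :=
      ⟨k*k + k - 3*(l*l) - 3*l, by rw [hs, hk, hl]; ring⟩
    omega

/-- Even values of `x² + y²`. -/
lemma repP_even {s : ℤ} (h : RepF (-1) s) (he : (2:ℤ) ∣ s) :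
    (∃ m, s = 4 * m ∧ RepF (-1) m) ∨ (∃ e, s = 8 * e + 2) := by
  obtain ⟨a, b, hs⟩ := h
  rcases Int.even_or_odd a with ⟨k, hk⟩ | ⟨k, hk⟩ <;>
    rcases Int.even_or_odd b with ⟨l, hl⟩ | ⟨l, hl⟩
  · exact Or.inl ⟨k ^ 2 + l ^ 2, by rw [hs, hk, hl]; ring, ⟨k, l, by ring⟩⟩
  · exfalso
    obtain ⟨M, hM⟩ : ∃ M, s = 2 * M + 1 := ⟨2*k^2 + 2*(l*l) + 2*l, by rw [hs, hk, hl]; ring⟩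
    omega
  · exfalso
    obtain ⟨M, hM⟩ : ∃ M, s = 2 * M + 1 := ⟨2*(k*k) + 2*k + 2*l^2, by rw [hs, hk, hl]; ring⟩
    omega
  · obtain ⟨K, hK⟩ := Int.even_mul_succ_self k
    obtain ⟨L, hL⟩ := Int.even_mul_succ_self l
    refine Or.inr ⟨K + L, ?_⟩
    have h2 : s = 4 * (k * (k+1)) + 4 * (l * (l+1)) + 2 := by rw [hs, hk, hl]; ring
    linear_combination h2 + 4 * hK + 4 * hL

/-- Even values of `x² + 3y²` are `0 mod 4` with quotient represented. -/
lemma repL_even {s : ℤ} (h : RepF (-3) s) (he : (2:ℤ) ∣ s) :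
    ∃ m, s = 4 * m ∧ RepF (-3) m := by
  obtain ⟨a, b, hs⟩ := h
  rcases Int.even_or_odd a with ⟨k, hk⟩ | ⟨k, hk⟩ <;>
    rcases Int.even_or_odd b with ⟨l, hl⟩ | ⟨l, hl⟩
  · exact ⟨k ^ 2 + 3 * l ^ 2, by rw [hs, hk, hl]; ring, ⟨k, l, by ring⟩⟩
  · exfalso
    obtain ⟨M, hM⟩ : ∃ M, s = 2 * M + 1 := ⟨2*k^2 + 6*(l*l) + 6*l + 1, by rw [hs, hk, hl]; ring⟩
    omega
  · exfalso
    obtain ⟨M, hM⟩ : ∃ M, s = 2 * M + 1 := ⟨2*(k*k) + 2*k + 6*l^2, by rw [hs, hk, hl]; ring⟩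
    omega
  · -- both odd; a - b = 2w
    obtain ⟨w, hw⟩ : ∃ w, a - b = 2 * w := ⟨k - l, by omega⟩
    rcases Int.even_or_odd w with ⟨z, hz⟩ | ⟨z, hz⟩
    · refine ⟨(b + z) ^ 2 + 3 * z ^ 2, by rw [hs, show a = b + 4 * z by omega]; ring,
        ⟨b + z, z, by ring⟩⟩
    · obtain ⟨w', hw'⟩ : ∃ w', w + b = 2 * w' := ⟨z + l + 1, by omega⟩
      refine ⟨(b - w') ^ 2 + 3 * w' ^ 2, by rw [hs, show a = 4 * w' - b by omega]; ring,
        ⟨b - w', w', by ring⟩⟩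

/-- Even values of `x² - 3y²`. -/
lemma repR_even {s : ℤ} (h : RepF 3 s) (he : (2:ℤ) ∣ s) :
    (∃ m, s = 4 * m ∧ RepF 3 m) ∨ (∃ f, s = 8 * f + 6) := by
  obtain ⟨a, b, hs⟩ := h
  rcases Int.even_or_odd a with ⟨k, hk⟩ | ⟨k, hk⟩ <;>
    rcases Int.even_or_odd b with ⟨l, hl⟩ | ⟨l, hl⟩
  · exact Or.inl ⟨k ^ 2 - 3 * l ^ 2, by rw [hs, hk, hl]; ring, ⟨k, l, by ring⟩⟩
  · exfalso
    obtain ⟨M, hM⟩ : ∃ M, s = 2 * M + 1 := ⟨2*k^2 - 6*(l*l) - 6*l - 2, by rw [hs, hk, hl]; ring⟩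
    omega
  · exfalso
    obtain ⟨M, hM⟩ : ∃ M, s = 2 * M + 1 := ⟨2*(k*k) + 2*k - 6*l^2, by rw [hs, hk, hl]; ring⟩
    omega
  · obtain ⟨K, hK⟩ := Int.even_mul_succ_self k
    obtain ⟨L, hL⟩ := Int.even_mul_succ_self l
    refine Or.inr ⟨K - 3 * L - 1, ?_⟩
    have h2 : s = 4 * (k * (k+1)) - 12 * (l * (l+1)) - 2 := by rw [hs, hk, hl]; ring
    linear_combination h2 + 4 * hK - 12 * hL

end Parity

section Mod3

lemma repP_three {s : ℤ} (h : RepF (-1) s) (h3 : (3:ℤ) ∣ s) :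
    ∃ m, s = 9 * m ∧ RepF (-1) m := by
  obtain ⟨a, b, hs⟩ := h
  have hns : ¬ IsSquare ((-1 : ℤ) : ZMod 3) := by decide
  obtain ⟨ha, hb⟩ := aniso (p := 3) hns (by rw [← hs] at *; exact_mod_cast h3)
  obtain ⟨a', rfl⟩ := ha
  obtain ⟨b', rfl⟩ := hb
  exact ⟨a' ^ 2 + b' ^ 2, by rw [hs]; push_cast; ring, ⟨a', b', by ring⟩⟩

lemma repL_three {s : ℤ} (h : RepF (-3) s) (h3 : (3:ℤ) ∣ s) :
    ∃ m, s = 3 * m ∧ RepF (-3) m := by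
  obtain ⟨a, b, hs⟩ := h
  have ha : (3:ℤ) ∣ a := by
    refine Int.prime_three.dvd_of_dvd_pow (n := 2) ?_
    have : a ^ 2 = s - 3 * b ^ 2 := by rw [hs]; ring
    rw [this]; exact dvd_sub h3 ⟨b ^ 2, rfl⟩
  obtain ⟨a', rfl⟩ := ha
  exact ⟨b ^ 2 + 3 * a' ^ 2, by rw [hs]; ring, ⟨b, a', by ring⟩⟩

lemma repL_three_mul {m : ℤ} (h : RepF (-3) m) : RepF (-3) (3 * m) := by
  obtain ⟨a, b, rfl⟩ := h
  exact ⟨3 * b, a, by ring⟩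

lemma repR_three {s : ℤ} (h : RepF 3 s) (h3 : (3:ℤ) ∣ s) :
    ∃ m, s = 3 * m ∧ RepF 3 (-m) := by
  obtain ⟨a, b, hs⟩ := h
  have ha : (3:ℤ) ∣ a := by
    refine Int.prime_three.dvd_of_dvd_pow (n := 2) ?_
    have : a ^ 2 = s + 3 * b ^ 2 := by rw [hs]; ring
    rw [this]; exact dvd_add h3 ⟨b ^ 2, rfl⟩
  obtain ⟨a', rfl⟩ := ha
  exact ⟨3 * a' ^ 2 - b ^ 2, by rw [hs]; ring, ⟨b, a', by ring⟩⟩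

lemma repR'_three {s : ℤ} (h : RepF 3 (-s)) (h3 : (3:ℤ) ∣ s) :
    ∃ m, s = 3 * m ∧ RepF 3 m := by
  obtain ⟨m, hm, hrep⟩ := repR_three h (by exact dvd_neg.mpr h3)
  exact ⟨-m, by omega, by simpa using hrep⟩

lemma repL_mod3 {s : ℤ} (h : RepF (-3) s) (h3 : ¬ (3:ℤ) ∣ s) : s % 3 = 1 := by
  obtain ⟨a, b, hs⟩ := h
  have hmod : a % 3 = 0 ∨ a % 3 = 1 ∨ a % 3 = 2 := by omega
  have ha : a = 3 * (a / 3) + a % 3 := by omega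
  set q := a / 3 with hq
  rcases hmod with hr | hr | hr
  · exfalso
    refine h3 ⟨3 * q ^ 2 + b ^ 2, ?_⟩
    rw [hs, show a = 3 * q by omega]; ring
  · obtain ⟨M, hM⟩ : ∃ M, s = 3 * M + 1 :=
      ⟨3 * q ^ 2 + 2 * q + b ^ 2, by rw [hs, show a = 3 * q + 1 by omega]; ring⟩
    omega
  · obtain ⟨M, hM⟩ : ∃ M, s = 3 * M + 1 :=
      ⟨3 * q ^ 2 + 4 * q + b ^ 2 + 1, by rw [hs, show a = 3 * q + 2 by omega]; ring⟩
    omega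

lemma repR'_mod3 {s : ℤ} (h : RepF 3 (-s)) (h3 : ¬ (3:ℤ) ∣ s) : s % 3 = 2 := by
  obtain ⟨a, b, hs⟩ := h
  have hmod : a % 3 = 0 ∨ a % 3 = 1 ∨ a % 3 = 2 := by omega
  have ha : a = 3 * (a / 3) + a % 3 := by omega
  set q := a / 3 with hq
  rcases hmod with hr | hr | hr
  · exfalso
    refine h3 ⟨-(3 * q ^ 2 - b ^ 2), ?_⟩
    have h2 : -s = (3 * q) ^ 2 - 3 * b ^ 2 := by rw [show a = 3 * q by omega] at hs; exact hs
    linear_combination -h2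
  · obtain ⟨M, hM⟩ : ∃ M, s = 3 * M + 2 :=
      ⟨-(3 * q ^ 2 + 2 * q - b ^ 2 + 1), by
        have h2 : -s = (3 * q + 1) ^ 2 - 3 * b ^ 2 := by
          rw [show a = 3 * q + 1 by omega] at hs; exact hs
        linear_combination -h2⟩
    omega
  · obtain ⟨M, hM⟩ : ∃ M, s = 3 * M + 2 :=
      ⟨-(3 * q ^ 2 + 4 * q - b ^ 2 + 2), by
        have h2 : -s = (3 * q + 2) ^ 2 - 3 * b ^ 2 := by
          rw [show a = 3 * q + 2 by omega] at hs; exact hs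
        linear_combination -h2⟩
    omega

end Mod3

section PrimeRep

lemma prime_repL_aux : ∀ n : ℕ, ∀ m : ℤ, m.natAbs ≤ n → ∀ p : ℕ, p.Prime → 5 ≤ p →
    0 < m → m < p → RepF (-3) (m * p) → RepF (-3) (p : ℤ) := by
  intro n
  induction n with
  | zero => intro m hm; intros; omega
  | succ n ih =>
    intro m hmn p hp hp5 hm0 hmp hrep
    rcases eq_or_lt_of_le (by omega : (1:ℤ) ≤ m) with h1 | h1
    · rw [← h1, one_mul] at hrep; exact hrep
    have hpo : Odd ((p:ℤ)) := by exact_mod_cast hp.odd_of_ne_two (by omega)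
    have hpodd : ¬ (2:ℤ) ∣ (p:ℤ) := by obtain ⟨j, hj⟩ := hpo; omega
    by_cases heven : (2:ℤ) ∣ m * p
    · obtain ⟨m', hm', hrep'⟩ := repL_even hrep heven
      have h2m : (2:ℤ) ∣ m := by
        rcases (Int.prime_two.dvd_mul.mp heven) with h | h
        · exact h
        · exact absurd h hpodd
      obtain ⟨k, rfl⟩ := h2m
      have h2k : (2:ℤ) ∣ k := by
        have hkp : (2:ℤ) ∣ k * p := ⟨m', by linarith⟩
        rcases (Int.prime_two.dvd_mul.mp hkp) with h | h
        · exact h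
        · exact absurd h hpodd
      obtain ⟨k', rfl⟩ := h2k
      have hk'm : k' * (p:ℤ) = m' := by linarith
      exact ih k' (by omega) p hp hp5 (by omega) (by omega) (by rw [hk'm]; exact hrep')
    · obtain ⟨a, b, hab⟩ := hrep
      have hab' : m * p = a ^ 2 + 3 * b ^ 2 := by linear_combination hab
      obtain ⟨a', hda, ha'0⟩ := exists_near m a hm0
      obtain ⟨b', hdb, hb'0⟩ := exists_near m b hm0
      have hmodd : ¬ (2:ℤ) ∣ m := fun ⟨k, hk⟩ => heven ⟨k * p, by rw [hk]; ring⟩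
      have ha's : 2 * |a'| ≤ m - 1 := by omega
      have hb's : 2 * |b'| ≤ m - 1 := by omega
      have hdvd : m ∣ a' ^ 2 + 3 * b' ^ 2 := by
        have key : a' ^ 2 + 3 * b' ^ 2 =
            (a ^ 2 + 3 * b ^ 2) - ((a - a') * (a + a') + 3 * ((b - b') * (b + b'))) := by ring
        rw [key]
        exact dvd_sub ⟨p, by linarith⟩ (dvd_add (hda.mul_right _) ((hdb.mul_right _).mul_left 3))
      obtain ⟨r, hr⟩ := hdvd
      have hrnn : 0 ≤ r := by nlinarith [sq_nonneg a', sq_nonneg b']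
      rcases eq_or_lt_of_le hrnn with hz | hrpos
      · -- r = 0 : a' = b' = 0
        exfalso
        have hz' : a' ^ 2 + 3 * b' ^ 2 = 0 := by rw [hr, ← hz]; ring
        have ha0 : a' = 0 := by nlinarith [sq_nonneg a', sq_nonneg b']
        have hb0 : b' = 0 := by nlinarith [sq_nonneg a', sq_nonneg b']
        subst ha0 hb0
        have hma : m ∣ a := by simpa using hda
        have hmb : m ∣ b := by simpa using hdb
        obtain ⟨a1, rfl⟩ := hma
        obtain ⟨b1, rfl⟩ := hmb
        have hdp : m ∣ (p:ℤ) := by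
          have hcancel : m * (p:ℤ) = m * (m * (a1 ^ 2 + 3 * b1 ^ 2)) := by
            rw [hab']; ring
          exact ⟨a1 ^ 2 + 3 * b1 ^ 2, mul_left_cancel₀ (by omega : m ≠ 0) hcancel⟩
        have hdp' : m.natAbs ∣ p := by
          have h' := Int.natAbs_dvd_natAbs.mpr hdp
          simpa using h'
        rcases (Nat.Prime.eq_one_or_self_of_dvd hp _ hdp') with h | h <;> omega
      · -- 0 < r < m
        have h4a : 4 * a' ^ 2 ≤ (m - 1) ^ 2 := by
          nlinarith [mul_le_mul ha's ha's (by positivity : (0:ℤ) ≤ 2 * |a'|)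
            (by omega : (0:ℤ) ≤ m - 1), sq_abs a']
        have h4b : 4 * b' ^ 2 ≤ (m - 1) ^ 2 := by
          nlinarith [mul_le_mul hb's hb's (by positivity : (0:ℤ) ≤ 2 * |b'|)
            (by omega : (0:ℤ) ≤ m - 1), sq_abs b']
        have hrm : r < m := by nlinarith
        have hu : m ∣ a * a' + 3 * (b * b') := by
          have key2 : a * a' + 3 * (b * b')
              = (a' ^ 2 + 3 * b' ^ 2) + (a' * (a - a') + 3 * (b' * (b - b'))) := by ring
          rw [key2, hr]
          exact dvd_add ⟨r, rfl⟩ (dvd_add (hda.mul_left _) ((hdb.mul_left _).mul_left 3))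
        have hv : m ∣ a * b' - a' * b := by
          have key3 : a * b' - a' * b = b' * (a - a') - a' * (b - b') := by ring
          rw [key3]
          exact dvd_sub (hda.mul_left _) (hdb.mul_left _)
        obtain ⟨u, hu⟩ := hu
        obtain ⟨v, hv⟩ := hv
        have hid : (m * p) * (m * r) = (a * a' + 3 * (b * b')) ^ 2 + 3 * (a * b' - a' * b) ^ 2 := by
          rw [hab', ← hr]; ring
        have hfin : m ^ 2 * (r * p) = m ^ 2 * (u ^ 2 + 3 * v ^ 2) := by
          linear_combination hid + (a * a' + 3 * (b * b') + m * u) * hu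
            + 3 * (a * b' - a' * b + m * v) * hv
        have hrp : r * (p:ℤ) = u ^ 2 + 3 * v ^ 2 :=
          mul_left_cancel₀ (pow_ne_zero 2 (by omega : m ≠ 0)) hfin
        exact ih r (by omega) p hp hp5 hrpos (by omega) ⟨u, v, by linear_combination hrp⟩

lemma prime_repR_aux : ∀ n : ℕ, ∀ m : ℤ, m.natAbs ≤ n → ∀ p : ℕ, p.Prime → 5 ≤ p →
    m ≠ 0 → |m| < p → RepF 3 (m * p) → RepF 3 (p : ℤ) ∨ RepF 3 (-(p : ℤ)) := by
  intro n
  induction n with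
  | zero => intro m hm; intros; omega
  | succ n ih =>
    intro m hmn p hp hp5 hm0 hmp hrep
    rcases eq_or_ne m 1 with rfl | hne1
    · rw [one_mul] at hrep; exact Or.inl hrep
    rcases eq_or_ne m (-1) with rfl | hnem1
    · right
      obtain ⟨a, b, hab⟩ := hrep
      exact ⟨a, b, by linear_combination hab⟩
    have hd0 : (0:ℤ) < |m| := abs_pos.mpr hm0
    have hd2 : (2:ℤ) ≤ |m| := by rw [Int.abs_eq_natAbs]; omega
    obtain ⟨a, b, hab⟩ := hrep
    obtain ⟨a', hda, ha'0⟩ := exists_near |m| a hd0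
    obtain ⟨b', hdb, hb'0⟩ := exists_near |m| b hd0
    have h1 : |m| ∣ a ^ 2 - 3 * b ^ 2 := by
      rw [← hab]; exact (abs_dvd m (m * p)).mpr ⟨p, rfl⟩
    have hdvd : |m| ∣ a' ^ 2 - 3 * b' ^ 2 := by
      have key : a' ^ 2 - 3 * b' ^ 2 =
          (a ^ 2 - 3 * b ^ 2) - ((a - a') * (a + a') - 3 * ((b - b') * (b + b'))) := by ring
      rw [key]
      exact dvd_sub h1 (dvd_sub (hda.mul_right _) ((hdb.mul_right _).mul_left 3))
    obtain ⟨r, hr⟩ := hdvd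
    rcases eq_or_ne r 0 with rfl | hrne
    · -- a'² = 3 b'², so a' = b' = 0
      exfalso
      have hz : a' ^ 2 = 3 * b' ^ 2 := by linear_combination hr
      obtain ⟨ha0, hb0⟩ := sq_eq_three_sq hz
      subst ha0 hb0
      have hma : |m| ∣ a := by simpa using hda
      have hmb : |m| ∣ b := by simpa using hdb
      obtain ⟨a1, ha1⟩ := hma
      obtain ⟨b1, hb1⟩ := hmb
      have hdp : m ∣ (p:ℤ) := by
        have hcancel : m * (p:ℤ) = m * (m * (a1 ^ 2 - 3 * b1 ^ 2)) := by
          rw [hab, ha1, hb1]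
          linear_combination (a1 ^ 2 - 3 * b1 ^ 2) * (sq_abs m)
        exact ⟨a1 ^ 2 - 3 * b1 ^ 2, mul_left_cancel₀ hm0 hcancel⟩
      have hdp' : m.natAbs ∣ p := by
        have h' := Int.natAbs_dvd_natAbs.mpr hdp
        simpa using h'
      rcases (Nat.Prime.eq_one_or_self_of_dvd hp _ hdp') with h | h <;>
        rcases abs_choice m with h2 | h2 <;> rw [h2] at hmp <;> omega
    · -- 0 < |r| < |m|
      have h4a : 4 * a' ^ 2 ≤ m ^ 2 := by
        nlinarith [mul_le_mul ha'0 ha'0 (by positivity : (0:ℤ) ≤ 2 * |a'|)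
          (by positivity : (0:ℤ) ≤ |m|), sq_abs a', sq_abs m]
      have h4b : 4 * b' ^ 2 ≤ m ^ 2 := by
        nlinarith [mul_le_mul hb'0 hb'0 (by positivity : (0:ℤ) ≤ 2 * |b'|)
          (by positivity : (0:ℤ) ≤ |m|), sq_abs b', sq_abs m]
      have hub : 4 * (|m| * r) ≤ m ^ 2 := by nlinarith [sq_nonneg b']
      have hlb : -(3 * m ^ 2) ≤ 4 * (|m| * r) := by nlinarith [sq_nonneg a']
      have hrub : r < |m| := by nlinarith [sq_abs m]
      have hrlb : -|m| < r := by nlinarith [sq_abs m]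
      have hu : |m| ∣ a * a' - 3 * (b * b') := by
        have key2 : a * a' - 3 * (b * b')
            = (a' ^ 2 - 3 * b' ^ 2) + (a' * (a - a') - 3 * (b' * (b - b'))) := by ring
        rw [key2, hr]
        exact dvd_add ⟨r, rfl⟩ (dvd_sub (hda.mul_left _) ((hdb.mul_left _).mul_left 3))
      have hv : |m| ∣ a * b' - a' * b := by
        have key3 : a * b' - a' * b = b' * (a - a') - a' * (b - b') := by ring
        rw [key3]
        exact dvd_sub (hda.mul_left _) (hdb.mul_left _)
      obtain ⟨u, hu⟩ := hu
      obtain ⟨v, hv⟩ := hv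
      have hid : (m * p) * (|m| * r)
          = (a * a' - 3 * (b * b')) ^ 2 - 3 * (a * b' - a' * b) ^ 2 := by
        rw [hab, ← hr]; ring
      have hfin : m * (|m| * (r * p)) = m * (m * (u ^ 2 - 3 * v ^ 2)) := by
        linear_combination hid + (a * a' - 3 * (b * b') + |m| * u) * hu
          - 3 * (a * b' - a' * b + |m| * v) * hv + (u ^ 2 - 3 * v ^ 2) * (sq_abs m)
      have hq := mul_left_cancel₀ hm0 hfin
      rcases abs_choice m with habs | habs
      · rw [habs] at hq
        have hrp : r * (p:ℤ) = u ^ 2 - 3 * v ^ 2 := mul_left_cancel₀ hm0 hq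
        refine ih r ?_ p hp hp5 hrne ?_ ⟨u, v, hrp⟩
        · rcases abs_choice m with h2 | h2 <;> rw [h2] at hrub hrlb <;> omega
        · rcases abs_choice m with h2 | h2 <;> rw [h2] at hrub hrlb hmp <;>
            rcases abs_choice r with h3 | h3 <;> rw [h3] <;> omega
      · rw [habs] at hq
        have hq2 : m * ((-r) * (p:ℤ)) = m * (u ^ 2 - 3 * v ^ 2) := by linear_combination hq
        have hrp : (-r) * (p:ℤ) = u ^ 2 - 3 * v ^ 2 := mul_left_cancel₀ hm0 hq2
        refine ih (-r) ?_ p hp hp5 (by omega) ?_ ⟨u, v, hrp⟩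
        · rcases abs_choice m with h2 | h2 <;> rw [h2] at hrub hrlb <;> omega
        · rcases abs_choice m with h2 | h2 <;> rw [h2] at hrub hrlb hmp <;>
            rcases abs_choice (-r) with h3 | h3 <;> rw [h3] <;> omega

lemma prime_repL {p : ℕ} [hpf : Fact p.Prime] (hp5 : 5 ≤ p)
    (h : IsSquare ((-3 : ℤ) : ZMod p)) : RepF (-3) (p : ℤ) := by
  obtain ⟨z, hz⟩ := h
  set t : ℤ := (z.val : ℤ) with ht
  have hzz : ((t : ℤ) : ZMod p) = z := by
    rw [ht]; push_cast; rw [ZMod.natCast_val, ZMod.cast_id]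
  have hpt : (p:ℤ) ∣ t ^ 2 + 3 := by
    apply (ZMod.intCast_zmod_eq_zero_iff_dvd _ p).mp
    push_cast
    rw [hzz]
    have : ((-3 : ℤ) : ZMod p) = z * z := hz
    push_cast at this
    linear_combination -this
  obtain ⟨m, hm⟩ := hpt
  have ht0 : 0 ≤ t := by positivity
  have htp : t < p := by rw [ht]; exact_mod_cast ZMod.val_lt z
  have hm0 : 0 < m := by nlinarith [sq_nonneg t]
  have hmp : m < p := by nlinarith
  exact prime_repL_aux m.natAbs m le_rfl p hpf.out hp5 hm0 hmp
    ⟨t, 1, by linear_combination -hm⟩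

lemma prime_repR {p : ℕ} [hpf : Fact p.Prime] (hp5 : 5 ≤ p)
    (h : IsSquare ((3 : ℤ) : ZMod p)) : RepF 3 (p : ℤ) ∨ RepF 3 (-(p : ℤ)) := by
  obtain ⟨z, hz⟩ := h
  set t : ℤ := (z.val : ℤ) with ht
  have hzz : ((t : ℤ) : ZMod p) = z := by
    rw [ht]; push_cast; rw [ZMod.natCast_val, ZMod.cast_id]
  have hpt : (p:ℤ) ∣ t ^ 2 - 3 := by
    apply (ZMod.intCast_zmod_eq_zero_iff_dvd _ p).mp
    push_cast
    rw [hzz]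
    have : ((3 : ℤ) : ZMod p) = z * z := hz
    push_cast at this
    linear_combination -this
  obtain ⟨m, hm⟩ := hpt
  have ht0 : 0 ≤ t := by positivity
  have htp : t < p := by rw [ht]; exact_mod_cast ZMod.val_lt z
  have hmne : m ≠ 0 := by
    rintro rfl
    obtain ⟨h1, h2⟩ := sq_eq_three_sq (a := t) (b := 1) (by linarith [hm]; )
    norm_num at h2
  have hm1 : m < p := by nlinarith
  have hm2 : -(p:ℤ) < m := by nlinarith
  have hmabs : |m| < p := by rcases abs_choice m with h2 | h2 <;> rw [h2] <;> omega
  exact prime_repR_aux m.natAbs m le_rfl p hpf.out hp5 hmne hmabs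
    ⟨t, 1, by linear_combination -hm⟩

lemma nonsq_mul_nonsq {p : ℕ} [Fact p.Prime] {a b : ZMod p}
    (ha : ¬ IsSquare a) (hb : ¬ IsSquare b) : IsSquare (a * b) := by
  have ha0 : a ≠ 0 := fun h => ha (h ▸ IsSquare.zero)
  have hb0 : b ≠ 0 := fun h => hb (h ▸ IsSquare.zero)
  have h1 : quadraticChar (ZMod p) a = -1 := quadraticChar_neg_one_iff_not_isSquare.mpr ha
  have h2 : quadraticChar (ZMod p) b = -1 := quadraticChar_neg_one_iff_not_isSquare.mpr hb
  have h3 : quadraticChar (ZMod p) (a * b) = 1 := by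
    rw [map_mul, h1, h2]; norm_num
  exact (quadraticChar_one_iff_isSquare (mul_ne_zero ha0 hb0)).mp h3

end PrimeRep

section Descent

lemma descent_aniso {p : ℕ} [Fact p.Prime] {c s : ℤ} (hc : ¬ IsSquare ((c : ℤ) : ZMod p))
    (hdvd : (p:ℤ) ∣ s) (hs : RepF c s) : ∃ m, s = (p:ℤ) ^ 2 * m ∧ RepF c m := by
  obtain ⟨a, b, rfl⟩ := hs
  obtain ⟨ha, hb⟩ := aniso hc hdvd
  obtain ⟨a1, rfl⟩ := ha
  obtain ⟨b1, rfl⟩ := hb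
  exact ⟨a1 ^ 2 - c * b1 ^ 2, by ring, ⟨a1, b1, rfl⟩⟩

lemma descent_once {p : ℕ} {s c d e : ℤ} (hp : Prime ((p:ℕ):ℤ))
    (hq : (p:ℤ) = d ^ 2 - c * e ^ 2) (hdvd : (p:ℤ) ∣ s) (hs : RepF c s) :
    ∃ m, s = (p:ℤ) * m ∧ RepF c m := by
  obtain ⟨a, b, rfl⟩ := hs
  obtain ⟨u, v, huv⟩ :=
    euler_div hp hdvd (⟨1, by linarith⟩ : (p:ℤ) ∣ d ^ 2 - c * e ^ 2)
  refine ⟨u ^ 2 - c * v ^ 2, ?_, ⟨u, v, rfl⟩⟩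
  apply mul_left_cancel₀ hp.ne_zero
  rw [← hq] at huv
  linear_combination huv

lemma descent_once_neg {p : ℕ} {s c d e : ℤ} (hp : Prime ((p:ℕ):ℤ))
    (hq : -(p:ℤ) = d ^ 2 - c * e ^ 2) (hdvd : (p:ℤ) ∣ s) (hs : RepF c s) :
    ∃ m, s = (p:ℤ) * m ∧ RepF c (-m) := by
  obtain ⟨a, b, rfl⟩ := hs
  obtain ⟨u, v, huv⟩ :=
    euler_div hp hdvd (⟨-1, by linarith⟩ : (p:ℤ) ∣ d ^ 2 - c * e ^ 2)
  refine ⟨-(u ^ 2 - c * v ^ 2), ?_, ⟨u, v, by ring⟩⟩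
  apply mul_left_cancel₀ hp.ne_zero
  rw [← hq] at huv
  linear_combination -huv

lemma natAbs_lt_mul {p : ℕ} {s m : ℤ} (hp : 2 ≤ p) (hs : s = (p:ℤ) * m) (hne : s ≠ 0) :
    m.natAbs < s.natAbs := by
  have h1 : s.natAbs = p * m.natAbs := by rw [hs, Int.natAbs_mul, Int.natAbs_natCast]
  have h2 : s.natAbs ≠ 0 := fun h => hne (Int.natAbs_eq_zero.mp h)
  have h3 : m.natAbs ≠ 0 := by
    intro h; rw [h, Nat.mul_zero] at h1; omega
  calc m.natAbs = 1 * m.natAbs := (one_mul _).symm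
    _ < p * m.natAbs := by
        apply Nat.mul_lt_mul_of_lt_of_le (by omega) le_rfl (by omega)
    _ = s.natAbs := h1.symm

lemma natAbs_lt_mul_sq {p : ℕ} {s m : ℤ} (hp : 2 ≤ p) (hs : s = (p:ℤ) ^ 2 * m) (hne : s ≠ 0) :
    m.natAbs < s.natAbs := by
  have h1 : s = (p:ℤ) * ((p:ℤ) * m) := by rw [hs]; ring
  have h2 : (p:ℤ) * m ≠ 0 := by
    intro h
    rw [h1, h, mul_zero] at hne
    exact hne rfl
  calc m.natAbs < ((p:ℤ) * m).natAbs := natAbs_lt_mul hp rfl h2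
    _ < s.natAbs := natAbs_lt_mul hp h1 hne

end Descent

section Symbols

variable {p : ℕ} [Fact p.Prime]

lemma cast_key : ((-1:ℤ) : ZMod p) * ((3:ℤ) : ZMod p) = ((-3:ℤ) : ZMod p) := by
  push_cast; ring

lemma eL_TT (h1 : IsSquare ((-1:ℤ) : ZMod p)) (h3 : IsSquare ((3:ℤ) : ZMod p)) :
    IsSquare ((-3:ℤ) : ZMod p) := by
  rw [← cast_key]; exact h1.mul h3

lemma eL_FF (h1 : ¬ IsSquare ((-1:ℤ) : ZMod p)) (h3 : ¬ IsSquare ((3:ℤ) : ZMod p)) :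
    IsSquare ((-3:ℤ) : ZMod p) := by
  rw [← cast_key]; exact nonsq_mul_nonsq h1 h3

lemma eL_TF (h1 : IsSquare ((-1:ℤ) : ZMod p)) (h3 : ¬ IsSquare ((3:ℤ) : ZMod p)) :
    ¬ IsSquare ((-3:ℤ) : ZMod p) := by
  intro h
  refine h3 ?_
  rw [show ((3:ℤ) : ZMod p) = ((-1:ℤ) : ZMod p) * ((-3:ℤ) : ZMod p) by push_cast; ring]
  exact h1.mul h

lemma eL_FT (h30 : ((3:ℤ) : ZMod p) ≠ 0) (h1 : ¬ IsSquare ((-1:ℤ) : ZMod p))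
    (h3 : IsSquare ((3:ℤ) : ZMod p)) : ¬ IsSquare ((-3:ℤ) : ZMod p) := by
  intro h
  refine h1 ?_
  rw [show ((-1:ℤ) : ZMod p) = ((-3:ℤ) : ZMod p) * (((3:ℤ) : ZMod p))⁻¹ by
    rw [show ((-3:ℤ) : ZMod p) = -(((3:ℤ) : ZMod p)) by push_cast; ring,
      neg_mul, mul_inv_cancel₀ h30]
    push_cast; ring]
  exact h.mul h3.inv

lemma mod4_one (h1 : IsSquare ((-1:ℤ) : ZMod p)) (hp2 : p ≠ 2) : p % 4 = 1 := by
  have h2 := (ZMod.exists_sq_eq_neg_one_iff (p := p)).mp (by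
    rwa [show ((-1:ℤ) : ZMod p) = (-1 : ZMod p) by push_cast; ring] at h1)
  have := (Fact.out : p.Prime).two_le
  have hodd : p % 2 = 1 := by
    rcases (Fact.out : p.Prime).eq_two_or_odd with h | h
    · omega
    · exact h
  omega

lemma mod4_three (h1 : ¬ IsSquare ((-1:ℤ) : ZMod p)) : p % 4 = 3 := by
  by_contra h
  exact h1 (by
    rw [show ((-1:ℤ) : ZMod p) = (-1 : ZMod p) by push_cast; ring]
    exact (ZMod.exists_sq_eq_neg_one_iff (p := p)).mpr h)

lemma pP_of (h4 : p % 4 = 1) : RepF (-1) (p:ℤ) := by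
  obtain ⟨a, b, hab⟩ := Nat.Prime.sq_add_sq (p := p) (by omega)
  have h : ((a:ℤ))^2 + (b:ℤ)^2 = p := by exact_mod_cast hab
  exact ⟨a, b, by linear_combination -h⟩

lemma pR_pick (hp5 : 5 ≤ p) (h3 : IsSquare ((3:ℤ) : ZMod p)) :
    (p % 4 = 1 → RepF 3 (p:ℤ)) ∧ (p % 4 = 3 → RepF 3 (-(p:ℤ))) := by
  have hodd : Odd ((p:ℤ)) := by
    have : p % 2 = 1 := by
      rcases (Fact.out : p.Prime).eq_two_or_odd with h | h
      · omega
      · exact h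
    rw [Int.odd_iff]; omega
  rcases prime_repR hp5 h3 with h | h
  · constructor
    · exact fun _ => h
    · intro h4
      have := repR_odd_mod_four h hodd
      omega
  · constructor
    · intro h4
      have := repR_odd_mod_four h (by
        rcases hodd with ⟨k, hk⟩; exact ⟨-k - 1, by omega⟩)
      omega
    · exact fun _ => h

end Symbols

section Core

lemma repP_nonneg {s : ℤ} (h : RepF (-1) s) : 0 ≤ s := by
  obtain ⟨a, b, rfl⟩ := h; nlinarith [sq_nonneg a, sq_nonneg b]

lemma repL_nonneg {s : ℤ} (h : RepF (-3) s) : 0 ≤ s := by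
  obtain ⟨a, b, rfl⟩ := h; nlinarith [sq_nonneg a, sq_nonneg b]

theorem core : ∀ n : ℕ, ∀ s : ℤ, s.natAbs ≤ n →
    ((RepF (-1) s → RepF 3 s → RepF (-3) s) ∧
     (RepF (-1) s → RepF (-3) s → RepF 3 s) ∧
     (RepF (-3) s → RepF 3 s → RepF (-1) s)) := by
  intro n
  induction n using Nat.strong_induction_on with
  | _ n ih =>
    intro s hsn
    by_cases hs0' : s = 0
    · subst hs0'
      exact ⟨fun _ _ => rep_zero _, fun _ _ => rep_zero _, fun _ _ => rep_zero _⟩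
    by_cases hs1' : s = 1
    · subst hs1'
      exact ⟨fun _ _ => rep_one _, fun _ _ => rep_one _, fun _ _ => rep_one _⟩
    by_cases h2 : (2:ℤ) ∣ s
    · -- even case
      refine ⟨?_, ?_, ?_⟩
      · intro hP hR
        rcases repR_even hR h2 with ⟨m, hm, hRm⟩ | ⟨f, hf⟩
        · rcases repP_even hP h2 with ⟨m', hm', hPm'⟩ | ⟨e, he⟩
          · have hmm : m' = m := by omega
            subst hmm
            have hrec := (ih m'.natAbs (by omega) m' le_rfl).1 hPm' hRm
            have := rep_sq_mul 2 hrec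
            rwa [show (2:ℤ)^2 * m' = 4 * m' by ring, ← hm] at this
          · exfalso; omega
        · rcases repP_even hP h2 with ⟨m', hm', _⟩ | ⟨e, he⟩
          · exfalso; omega
          · exfalso; omega
      · intro hP hL
        obtain ⟨m, hm, hLm⟩ := repL_even hL h2
        rcases repP_even hP h2 with ⟨m', hm', hPm'⟩ | ⟨e, he⟩
        · have hmm : m' = m := by omega
          subst hmm
          have hrec := (ih m'.natAbs (by omega) m' le_rfl).2.1 hPm' hLm
          have := rep_sq_mul 2 hrec
          rwa [show (2:ℤ)^2 * m' = 4 * m' by ring, ← hm] at this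
        · exfalso; omega
      · intro hL hR
        obtain ⟨m, hm, hLm⟩ := repL_even hL h2
        rcases repR_even hR h2 with ⟨m', hm', hRm'⟩ | ⟨f, hf⟩
        · have hmm : m' = m := by omega
          subst hmm
          have hrec := (ih m'.natAbs (by omega) m' le_rfl).2.2 hLm hRm'
          have := rep_sq_mul 2 hrec
          rwa [show (2:ℤ)^2 * m' = 4 * m' by ring, ← hm] at this
        · exfalso; omega
    by_cases h3 : (3:ℤ) ∣ s
    · -- divисible by three case
      refine ⟨?_, ?_, ?_⟩
      · intro hP hR
        obtain ⟨m9, hm9, hPm⟩ := repP_three hP h3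
        obtain ⟨m1, hm1, hRm1⟩ := repR_three hR h3
        have h31 : (3:ℤ) ∣ m1 := ⟨m9, by omega⟩
        obtain ⟨m, hm, hRm⟩ := repR'_three hRm1 h31
        have hmm : m = m9 := by omega
        subst hmm
        have hrec := (ih m.natAbs (by omega) m le_rfl).1 hPm hRm
        have := rep_sq_mul 3 hrec
        rwa [show (3:ℤ)^2 * m = 9 * m by ring, ← hm9] at this
      · intro hP hL
        obtain ⟨m9, hm9, hPm⟩ := repP_three hP h3
        obtain ⟨m1, hm1, hLm1⟩ := repL_three hL h3
        have h31 : (3:ℤ) ∣ m1 := ⟨m9, by omega⟩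
        obtain ⟨m, hm, hLm⟩ := repL_three hLm1 h31
        have hmm : m = m9 := by omega
        subst hmm
        have hrec := (ih m.natAbs (by omega) m le_rfl).2.1 hPm hLm
        have := rep_sq_mul 3 hrec
        rwa [show (3:ℤ)^2 * m = 9 * m by ring, ← hm9] at this
      · intro hL hR
        obtain ⟨m1, hm1, hLm1⟩ := repL_three hL h3
        obtain ⟨m1', hm1', hRm1'⟩ := repR_three hR h3
        have hmm1 : m1' = m1 := by omega
        subst hmm1
        have h31 : (3:ℤ) ∣ m1' := by
          by_contra hno
          have hx := repL_mod3 hLm1 hno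
          have hy := repR'_mod3 hRm1' hno
          omega
        obtain ⟨m, hm, hLm⟩ := repL_three hLm1 h31
        obtain ⟨m', hm', hRm⟩ := repR'_three hRm1' h31
        have hmm : m' = m := by omega
        subst hmm
        have hrec := (ih m'.natAbs (by omega) m' le_rfl).2.2 hLm hRm
        have := rep_sq_mul 3 hrec
        rwa [show (3:ℤ)^2 * m' = 9 * m' by ring, ← (by omega : s = 9 * m')] at this
    -- main case : s has a prime factor >= 5
    refine ⟨?_, ?_, ?_⟩
    · intro hP hR
      have hs0 : 0 ≤ s := repP_nonneg hP
      have hne : s ≠ 0 := hs0'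
      set P := s.natAbs.minFac with hPdef
      have hPp : P.Prime := Nat.minFac_prime (by omega)
      haveI : Fact P.Prime := ⟨hPp⟩
      have hprime : Prime ((P : ℕ) : ℤ) := Nat.prime_iff_prime_int.mp hPp
      have hPdvd : (P:ℤ) ∣ s :=
        (Int.dvd_natAbs).mp (Int.natCast_dvd_natCast.mpr (Nat.minFac_dvd _))
      have hP2 : P ≠ 2 := by
        intro h
        exact h2 (by rw [h] at hPdvd; exact_mod_cast hPdvd)
      have hP3 : P ≠ 3 := by
        intro h
        exact h3 (by rw [h] at hPdvd; exact_mod_cast hPdvd)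
      have hP4' : P ≠ 4 := by intro h; rw [h] at hPp; norm_num at hPp
      have hP5 : 5 ≤ P := by have := hPp.two_le; omega
      have h30 : ((3:ℤ) : ZMod P) ≠ 0 := by
        intro h
        have hd := (ZMod.intCast_zmod_eq_zero_iff_dvd 3 P).mp h
        have : P ∣ 3 := by exact_mod_cast hd
        have := Nat.le_of_dvd (by norm_num) this
        omega
      have hlt1 : ∀ m : ℤ, s = (P:ℤ) * m → m.natAbs < n :=
        fun m hm => Nat.lt_of_lt_of_le (natAbs_lt_mul hPp.two_le hm hne) hsn
      have hlt2 : ∀ m : ℤ, s = (P:ℤ)^2 * m → m.natAbs < n :=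
        fun m hm => Nat.lt_of_lt_of_le (natAbs_lt_mul_sq hPp.two_le hm hne) hsn
      have hPz : ((P:ℕ):ℤ) ≠ 0 := hprime.ne_zero
      have hPz2 : ((P:ℕ):ℤ)^2 ≠ 0 := pow_ne_zero 2 hPz
      by_cases e1 : IsSquare ((-1:ℤ) : ZMod P) <;> by_cases e3 : IsSquare ((3:ℤ) : ZMod P)
      · -- both squares
        have h4 : P % 4 = 1 := mod4_one e1 hP2
        obtain ⟨d, e', hde⟩ := (pR_pick hP5 e3).1 h4
        obtain ⟨m, hm, hRm⟩ := descent_once hprime hde hPdvd hR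
        obtain ⟨d2, e2, hde2⟩ := pP_of h4
        obtain ⟨m', hm', hPm⟩ := descent_once hprime hde2 hPdvd hP
        have hmm : m' = m := mul_left_cancel₀ hPz (by rw [← hm, ← hm'])
        subst hmm
        have hrec := (ih m'.natAbs (hlt1 m' hm) m' le_rfl).1 hPm hRm
        rw [hm]
        exact rep_mul (prime_repL hP5 (eL_TT e1 e3)) hrec
      · -- e1 square, 3 not
        have h4 : P % 4 = 1 := mod4_one e1 hP2
        obtain ⟨m, hm, hRm⟩ := descent_aniso e3 hPdvd hR
        obtain ⟨d2, e2, hde2⟩ := pP_of h4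
        obtain ⟨m1, hm1, hPm1⟩ := descent_once hprime hde2 hPdvd hP
        have hdvd2 : (P:ℤ) ∣ m1 := ⟨m, mul_left_cancel₀ hPz (by rw [← hm1, hm]; ring)⟩
        obtain ⟨m2, hm2, hPm2⟩ := descent_once hprime hde2 hdvd2 hPm1
        have hmm : m2 = m := by
          apply mul_left_cancel₀ hPz2
          rw [← hm, hm1, hm2]; ring
        subst hmm
        have hrec := (ih m2.natAbs (hlt2 m2 hm) m2 le_rfl).1 hPm2 hRm
        rw [hm]
        exact rep_sq_mul _ hrec
      · -- e1 not, 3 square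
        have h4 : P % 4 = 3 := mod4_three e1
        obtain ⟨d, e', hde⟩ := (pR_pick hP5 e3).2 h4
        obtain ⟨m, hm, hPm⟩ := descent_aniso e1 hPdvd hP
        obtain ⟨m1, hm1, hRm1⟩ := descent_once_neg hprime hde hPdvd hR
        have hdvd2 : (P:ℤ) ∣ -m1 := by
          refine dvd_neg.mpr ⟨m, mul_left_cancel₀ hPz (by rw [← hm1, hm]; ring)⟩
        obtain ⟨k, hk, hRk⟩ := descent_once_neg hprime hde hdvd2 hRm1
        have hmk : m = -k := by
          apply mul_left_cancel₀ hPz2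
          rw [← hm, hm1, show m1 = -((P:ℤ) * k) by linarith]; ring
        have hRm2 : RepF 3 m := by rw [hmk]; exact hRk
        have hrec := (ih m.natAbs (hlt2 m hm) m le_rfl).1 hPm hRm2
        rw [hm]
        exact rep_sq_mul _ hrec
      · -- both nonsquares
        obtain ⟨m, hm, hPm⟩ := descent_aniso e1 hPdvd hP
        obtain ⟨m', hm', hRm⟩ := descent_aniso e3 hPdvd hR
        have hmm : m' = m := mul_left_cancel₀ hPz2 (by rw [← hm, ← hm'])
        subst hmm
        have hrec := (ih m'.natAbs (hlt2 m' hm) m' le_rfl).1 hPm hRm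
        rw [hm]
        exact rep_sq_mul _ hrec
    · intro hP hL
      have hs0 : 0 ≤ s := repP_nonneg hP
      have hne : s ≠ 0 := hs0'
      set P := s.natAbs.minFac with hPdef
      have hPp : P.Prime := Nat.minFac_prime (by omega)
      haveI : Fact P.Prime := ⟨hPp⟩
      have hprime : Prime ((P : ℕ) : ℤ) := Nat.prime_iff_prime_int.mp hPp
      have hPdvd : (P:ℤ) ∣ s :=
        (Int.dvd_natAbs).mp (Int.natCast_dvd_natCast.mpr (Nat.minFac_dvd _))
      have hP2 : P ≠ 2 := by
        intro h
        exact h2 (by rw [h] at hPdvd; exact_mod_cast hPdvd)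
      have hP3 : P ≠ 3 := by
        intro h
        exact h3 (by rw [h] at hPdvd; exact_mod_cast hPdvd)
      have hP4' : P ≠ 4 := by intro h; rw [h] at hPp; norm_num at hPp
      have hP5 : 5 ≤ P := by have := hPp.two_le; omega
      have h30 : ((3:ℤ) : ZMod P) ≠ 0 := by
        intro h
        have hd := (ZMod.intCast_zmod_eq_zero_iff_dvd 3 P).mp h
        have : P ∣ 3 := by exact_mod_cast hd
        have := Nat.le_of_dvd (by norm_num) this
        omega
      have hlt1 : ∀ m : ℤ, s = (P:ℤ) * m → m.natAbs < n :=
        fun m hm => Nat.lt_of_lt_of_le (natAbs_lt_mul hPp.two_le hm hne) hsn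
      have hlt2 : ∀ m : ℤ, s = (P:ℤ)^2 * m → m.natAbs < n :=
        fun m hm => Nat.lt_of_lt_of_le (natAbs_lt_mul_sq hPp.two_le hm hne) hsn
      have hPz : ((P:ℕ):ℤ) ≠ 0 := hprime.ne_zero
      have hPz2 : ((P:ℕ):ℤ)^2 ≠ 0 := pow_ne_zero 2 hPz
      by_cases e1 : IsSquare ((-1:ℤ) : ZMod P) <;> by_cases e3 : IsSquare ((3:ℤ) : ZMod P)
      · -- both squares
        have h4 : P % 4 = 1 := mod4_one e1 hP2
        obtain ⟨d2, e2, hde2⟩ := pP_of h4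
        obtain ⟨m, hm, hPm⟩ := descent_once hprime hde2 hPdvd hP
        obtain ⟨d3, e3', hde3⟩ := prime_repL hP5 (eL_TT e1 e3)
        obtain ⟨m', hm', hLm⟩ := descent_once hprime hde3 hPdvd hL
        have hmm : m' = m := mul_left_cancel₀ hPz (by rw [← hm, ← hm'])
        subst hmm
        have hrec := (ih m'.natAbs (hlt1 m' hm) m' le_rfl).2.1 hPm hLm
        obtain ⟨pR⟩ : Nonempty (RepF 3 ((P:ℕ):ℤ)) := ⟨(pR_pick hP5 e3).1 h4⟩
        rw [hm]
        exact rep_mul pR hrec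
      · -- e1 square, 3 not : -3 nonsquare
        have h4 : P % 4 = 1 := mod4_one e1 hP2
        obtain ⟨m, hm, hLm⟩ := descent_aniso (eL_TF e1 e3) hPdvd hL
        obtain ⟨d2, e2, hde2⟩ := pP_of h4
        obtain ⟨m1, hm1, hPm1⟩ := descent_once hprime hde2 hPdvd hP
        have hdvd2 : (P:ℤ) ∣ m1 := ⟨m, mul_left_cancel₀ hPz (by rw [← hm1, hm]; ring)⟩
        obtain ⟨m2, hm2, hPm2⟩ := descent_once hprime hde2 hdvd2 hPm1
        have hmm : m2 = m := by
          apply mul_left_cancel₀ hPz2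
          rw [← hm, hm1, hm2]; ring
        subst hmm
        have hrec := (ih m2.natAbs (hlt2 m2 hm) m2 le_rfl).2.1 hPm2 hLm
        rw [hm]
        exact rep_sq_mul _ hrec
      · -- e1 not, 3 square : -3 nonsquare
        obtain ⟨m, hm, hLm⟩ := descent_aniso (eL_FT h30 e1 e3) hPdvd hL
        obtain ⟨m', hm', hPm⟩ := descent_aniso e1 hPdvd hP
        have hmm : m' = m := mul_left_cancel₀ hPz2 (by rw [← hm, ← hm'])
        subst hmm
        have hrec := (ih m'.natAbs (hlt2 m' hm) m' le_rfl).2.1 hPm hLm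
        rw [hm]
        exact rep_sq_mul _ hrec
      · -- both nonsquares : -3 square
        obtain ⟨m, hm, hPm⟩ := descent_aniso e1 hPdvd hP
        obtain ⟨d3, e3', hde3⟩ := prime_repL hP5 (eL_FF e1 e3)
        obtain ⟨m1, hm1, hLm1⟩ := descent_once hprime hde3 hPdvd hL
        have hdvd2 : (P:ℤ) ∣ m1 := ⟨m, mul_left_cancel₀ hPz (by rw [← hm1, hm]; ring)⟩
        obtain ⟨m2, hm2, hLm2⟩ := descent_once hprime hde3 hdvd2 hLm1
        have hmm : m2 = m := by
          apply mul_left_cancel₀ hPz2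
          rw [← hm, hm1, hm2]; ring
        subst hmm
        have hrec := (ih m2.natAbs (hlt2 m2 hm) m2 le_rfl).2.1 hPm hLm2
        rw [hm]
        exact rep_sq_mul _ hrec
    · intro hL hR
      have hs0 : 0 ≤ s := repL_nonneg hL
      have hne : s ≠ 0 := hs0'
      set P := s.natAbs.minFac with hPdef
      have hPp : P.Prime := Nat.minFac_prime (by omega)
      haveI : Fact P.Prime := ⟨hPp⟩
      have hprime : Prime ((P : ℕ) : ℤ) := Nat.prime_iff_prime_int.mp hPp
      have hPdvd : (P:ℤ) ∣ s :=
        (Int.dvd_natAbs).mp (Int.natCast_dvd_natCast.mpr (Nat.minFac_dvd _))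
      have hP2 : P ≠ 2 := by
        intro h
        exact h2 (by rw [h] at hPdvd; exact_mod_cast hPdvd)
      have hP3 : P ≠ 3 := by
        intro h
        exact h3 (by rw [h] at hPdvd; exact_mod_cast hPdvd)
      have hP4' : P ≠ 4 := by intro h; rw [h] at hPp; norm_num at hPp
      have hP5 : 5 ≤ P := by have := hPp.two_le; omega
      have h30 : ((3:ℤ) : ZMod P) ≠ 0 := by
        intro h
        have hd := (ZMod.intCast_zmod_eq_zero_iff_dvd 3 P).mp h
        have : P ∣ 3 := by exact_mod_cast hd
        have := Nat.le_of_dvd (by norm_num) this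
        omega
      have hlt1 : ∀ m : ℤ, s = (P:ℤ) * m → m.natAbs < n :=
        fun m hm => Nat.lt_of_lt_of_le (natAbs_lt_mul hPp.two_le hm hne) hsn
      have hlt2 : ∀ m : ℤ, s = (P:ℤ)^2 * m → m.natAbs < n :=
        fun m hm => Nat.lt_of_lt_of_le (natAbs_lt_mul_sq hPp.two_le hm hne) hsn
      have hPz : ((P:ℕ):ℤ) ≠ 0 := hprime.ne_zero
      have hPz2 : ((P:ℕ):ℤ)^2 ≠ 0 := pow_ne_zero 2 hPz
      by_cases e1 : IsSquare ((-1:ℤ) : ZMod P) <;> by_cases e3 : IsSquare ((3:ℤ) : ZMod P)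
      · -- both squares
        have h4 : P % 4 = 1 := mod4_one e1 hP2
        obtain ⟨d3, e3', hde3⟩ := prime_repL hP5 (eL_TT e1 e3)
        obtain ⟨m, hm, hLm⟩ := descent_once hprime hde3 hPdvd hL
        obtain ⟨d, e', hde⟩ := (pR_pick hP5 e3).1 h4
        obtain ⟨m', hm', hRm⟩ := descent_once hprime hde hPdvd hR
        have hmm : m' = m := mul_left_cancel₀ hPz (by rw [← hm, ← hm'])
        subst hmm
        have hrec := (ih m'.natAbs (hlt1 m' hm) m' le_rfl).2.2 hLm hRm
        rw [hm]
        exact rep_mul (pP_of h4) hrec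
      · -- e1 square, 3 not : -3 nonsquare
        obtain ⟨m, hm, hLm⟩ := descent_aniso (eL_TF e1 e3) hPdvd hL
        obtain ⟨m', hm', hRm⟩ := descent_aniso e3 hPdvd hR
        have hmm : m' = m := mul_left_cancel₀ hPz2 (by rw [← hm, ← hm'])
        subst hmm
        have hrec := (ih m'.natAbs (hlt2 m' hm) m' le_rfl).2.2 hLm hRm
        rw [hm]
        exact rep_sq_mul _ hrec
      · -- e1 not, 3 square : -3 nonsquare
        have h4 : P % 4 = 3 := mod4_three e1
        obtain ⟨m, hm, hLm⟩ := descent_aniso (eL_FT h30 e1 e3) hPdvd hL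
        obtain ⟨d, e', hde⟩ := (pR_pick hP5 e3).2 h4
        obtain ⟨m1, hm1, hRm1⟩ := descent_once_neg hprime hde hPdvd hR
        have hdvd2 : (P:ℤ) ∣ -m1 := by
          refine dvd_neg.mpr ⟨m, mul_left_cancel₀ hPz (by rw [← hm1, hm]; ring)⟩
        obtain ⟨k, hk, hRk⟩ := descent_once_neg hprime hde hdvd2 hRm1
        have hmk : m = -k := by
          apply mul_left_cancel₀ hPz2
          rw [← hm, hm1, show m1 = -((P:ℤ) * k) by linarith]; ring
        have hRm2 : RepF 3 m := by rw [hmk]; exact hRk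
        have hrec := (ih m.natAbs (hlt2 m hm) m le_rfl).2.2 hLm hRm2
        rw [hm]
        exact rep_sq_mul _ hrec
      · -- both nonsquares : -3 square
        obtain ⟨m, hm, hRm⟩ := descent_aniso e3 hPdvd hR
        obtain ⟨d3, e3', hde3⟩ := prime_repL hP5 (eL_FF e1 e3)
        obtain ⟨m1, hm1, hLm1⟩ := descent_once hprime hde3 hPdvd hL
        have hdvd2 : (P:ℤ) ∣ m1 := ⟨m, mul_left_cancel₀ hPz (by rw [← hm1, hm]; ring)⟩
        obtain ⟨m2, hm2, hLm2⟩ := descent_once hprime hde3 hdvd2 hLm1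
        have hmm : m2 = m := by
          apply mul_left_cancel₀ hPz2
          rw [← hm, hm1, hm2]; ring
        subst hmm
        have hrec := (ih m2.natAbs (hlt2 m2 hm) m2 le_rfl).2.2 hLm2 hRm
        rw [hm]
        exact rep_sq_mul _ hrec

end Core

section Final

lemma repP_odd_mod {t : ℤ} (h : RepF (-1) t) (ho : Odd t) : t % 4 = 1 := by
  obtain ⟨a, b, hs⟩ := h
  obtain ⟨mm, hmm⟩ := ho
  rcases Int.even_or_odd a with ⟨k, hk⟩ | ⟨k, hk⟩ <;>
    rcases Int.even_or_odd b with ⟨l, hl⟩ | ⟨l, hl⟩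
  · obtain ⟨M, hM⟩ : ∃ M, t = 2 * M := ⟨2*k^2 + 2*l^2, by rw [hs, hk, hl]; ring⟩
    omega
  · obtain ⟨M, hM⟩ : ∃ M, t = 4 * M + 1 :=
      ⟨k^2 + l*l + l, by rw [hs, hk, hl]; ring⟩
    omega
  · obtain ⟨M, hM⟩ : ∃ M, t = 4 * M + 1 :=
      ⟨k*k + k + l^2, by rw [hs, hk, hl]; ring⟩
    omega
  · obtain ⟨M, hM⟩ : ∃ M, t = 2 * M := ⟨2*(k*k) + 2*k + 2*(l*l) + 2*l + 1, by rw [hs, hk, hl]; ring⟩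
    omega

lemma A_odd_mod {t : ℤ} (h : ∃ x y : ℤ, t = 3 * x ^ 2 - y ^ 2) (ho : Odd t) : t % 4 = 3 := by
  obtain ⟨x, y, hs⟩ := h
  obtain ⟨mm, hmm⟩ := ho
  rcases Int.even_or_odd x with ⟨k, hk⟩ | ⟨k, hk⟩ <;>
    rcases Int.even_or_odd y with ⟨l, hl⟩ | ⟨l, hl⟩
  · obtain ⟨M, hM⟩ : ∃ M, t = 2 * M := ⟨6*k^2 - 2*l^2, by rw [hs, hk, hl]; ring⟩
    omega
  · obtain ⟨M, hM⟩ : ∃ M, t = 4 * M + 3 :=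
      ⟨3*k^2 - l*l - l - 1, by rw [hs, hk, hl]; ring⟩
    omega
  · obtain ⟨M, hM⟩ : ∃ M, t = 4 * M + 3 :=
      ⟨3*(k*k) + 3*k - l^2, by rw [hs, hk, hl]; ring⟩
    omega
  · obtain ⟨M, hM⟩ : ∃ M, t = 2 * M := ⟨6*(k*k) + 6*k - 2*(l*l) - 2*l + 1, by rw [hs, hk, hl]; ring⟩
    omega

/-- If `t = 3x² - y²` is even, then `t/2` is of the form `u² - 3v²`. -/
lemma A_half {t s : ℤ} (h : ∃ x y : ℤ, t = 3 * x ^ 2 - y ^ 2) (hts : t = 2 * s) :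
    RepF 3 s := by
  obtain ⟨x, y, hs⟩ := h
  obtain ⟨u, v, hx, hy⟩ : ∃ u v : ℤ, x = u + v ∧ y = u - v := by
    rcases Int.even_or_odd x with ⟨k, hk⟩ | ⟨k, hk⟩ <;>
      rcases Int.even_or_odd y with ⟨l, hl⟩ | ⟨l, hl⟩
    · exact ⟨k + l, k - l, by omega, by omega⟩
    · exfalso
      obtain ⟨M, hM⟩ : ∃ M, t = 2 * M + 1 :=
        ⟨6*k^2 - 2*(l*l) - 2*l - 1, by rw [hs, hk, hl]; ring⟩
      omega
    · exfalso
      obtain ⟨M, hM⟩ : ∃ M, t = 2 * M + 1 :=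
        ⟨6*(k*k) + 6*k - 2*l^2 + 1, by rw [hs, hk, hl]; ring⟩
      omega
    · exact ⟨k + l + 1, k - l, by omega, by omega⟩
  refine ⟨u + 2*v, v, ?_⟩
  have key : t = 2 * ((u + 2*v)^2 - 3*v^2) := by rw [hs, hx, hy]; ring
  linarith

/-- If `s = u² - 3v²`, then `2s = 3x² - y²`. -/
lemma A_lift {s : ℤ} (h : RepF 3 s) : ∃ x y : ℤ, 2 * s = 3 * x ^ 2 - y ^ 2 := by
  obtain ⟨d, e, rfl⟩ := h
  exact ⟨d - e, d - 3*e, by ring⟩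

lemma B_half {t s : ℤ} (h : RepF (-1) t) (hts : t = 2 * s) : RepF (-1) s := by
  obtain ⟨a, b, hs⟩ := h
  rcases Int.even_or_odd a with ⟨k, hk⟩ | ⟨k, hk⟩ <;>
    rcases Int.even_or_odd b with ⟨l, hl⟩ | ⟨l, hl⟩
  · refine ⟨k + l, k - l, ?_⟩
    have key : t = 2 * ((k+l)^2 - (-1) * (k-l)^2) := by rw [hs, hk, hl]; ring
    linarith
  · exfalso
    obtain ⟨M, hM⟩ : ∃ M, t = 2 * M + 1 := ⟨2*k^2 + 2*(l*l) + 2*l, by rw [hs, hk, hl]; ring⟩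
    omega
  · exfalso
    obtain ⟨M, hM⟩ : ∃ M, t = 2 * M + 1 := ⟨2*(k*k) + 2*k + 2*l^2, by rw [hs, hk, hl]; ring⟩
    omega
  · refine ⟨k + l + 1, k - l, ?_⟩
    have key : t = 2 * ((k+l+1)^2 - (-1) * (k-l)^2) := by rw [hs, hk, hl]; ring
    linarith

end Final

theorem stmt_14 :
    let A : Set ℤ := {t | ∃ x y : ℤ, t = 3 * x ^ 2 - y ^ 2}
    let B : Set ℤ := {t | ∃ x y : ℤ, t = x ^ 2 + y ^ 2}
    let C : Set ℤ := {t | ∃ x y : ℤ, t = 2 * (x ^ 2 - x * y + y ^ 2)}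
    A ∩ B ⊂ C ∧ B ∩ C ⊂ A ∧ C ∩ A ⊂ B := by
  intro A B C
  have hAB_C : A ∩ B ⊆ C := by
    rintro t ⟨⟨x, y, hxy⟩, ⟨a, b, hab⟩⟩
    have hP : RepF (-1) t := ⟨a, b, by linear_combination hab⟩
    have heven : t % 2 = 0 := by
      by_contra hodd
      have h1 := repP_odd_mod hP (by rw [Int.odd_iff]; omega)
      have h2 := A_odd_mod ⟨x, y, hxy⟩ (by rw [Int.odd_iff]; omega)
      omega
    obtain ⟨s, hts⟩ : ∃ s, t = 2 * s := ⟨t / 2, by omega⟩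
    have hRs : RepF 3 s := A_half ⟨x, y, hxy⟩ hts
    have hPs : RepF (-1) s := B_half hP hts
    have hLs : RepF (-3) s := (core s.natAbs s le_rfl).1 hPs hRs
    obtain ⟨u, v, huv⟩ := rep_loesch hLs
    exact ⟨u, v, by rw [hts, huv]⟩
  have hBC_A : B ∩ C ⊆ A := by
    rintro t ⟨⟨a, b, hab⟩, ⟨x, y, hxy⟩⟩
    have hP : RepF (-1) t := ⟨a, b, by linear_combination hab⟩
    have hts : t = 2 * (x ^ 2 - x * y + y ^ 2) := hxy
    have hLs : RepF (-3) (x ^ 2 - x * y + y ^ 2) := loesch_rep rfl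
    have hPs : RepF (-1) (x ^ 2 - x * y + y ^ 2) := B_half hP hts
    have hRs : RepF 3 (x ^ 2 - x * y + y ^ 2) :=
      (core _ _ le_rfl).2.1 hPs hLs
    obtain ⟨X, Y, hXY⟩ := A_lift hRs
    exact ⟨X, Y, by rw [hts, ← hXY]⟩
  have hCA_B : C ∩ A ⊆ B := by
    rintro t ⟨⟨x, y, hxy⟩, ⟨a, b, hab⟩⟩
    have hts : t = 2 * (x ^ 2 - x * y + y ^ 2) := hxy
    have hLs : RepF (-3) (x ^ 2 - x * y + y ^ 2) := loesch_rep rfl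
    have hRs : RepF 3 (x ^ 2 - x * y + y ^ 2) := A_half ⟨a, b, hab⟩ hts
    have hPs : RepF (-1) (x ^ 2 - x * y + y ^ 2) :=
      (core _ _ le_rfl).2.2 hLs hRs
    obtain ⟨c, d, hcd⟩ := hPs
    exact ⟨c + d, c - d, by rw [hts, hcd]; ring⟩
  refine ⟨?_, ?_, ?_⟩
  · rw [Set.ssubset_def]
    refine ⟨hAB_C, fun hcon => ?_⟩
    have h6C : (6:ℤ) ∈ C := ⟨2, 1, by norm_num⟩
    obtain ⟨-, ⟨a, b, hab⟩⟩ := hcon h6C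
    have hP : RepF (-1) (6:ℤ) := ⟨a, b, by linear_combination hab⟩
    rcases repP_even hP (by norm_num) with ⟨m, hm, _⟩ | ⟨e, he⟩ <;> omega
  · rw [Set.ssubset_def]
    refine ⟨hBC_A, fun hcon => ?_⟩
    have hA : (-1:ℤ) ∈ A := ⟨0, 1, by norm_num⟩
    obtain ⟨⟨a, b, hab⟩, -⟩ := hcon hA
    have hP : RepF (-1) (-1:ℤ) := ⟨a, b, by linear_combination hab⟩
    have := repP_nonneg hP
    omega
  · rw [Set.ssubset_def]
    refine ⟨hCA_B, fun hcon => ?_⟩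
    have hB : (1:ℤ) ∈ B := ⟨0, 1, by norm_num⟩
    obtain ⟨⟨x, y, hxy⟩, -⟩ := hcon hB
    have : (2:ℤ) ∣ 1 := ⟨x ^ 2 - x * y + y ^ 2, hxy⟩
    norm_num at this
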